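/- Let G be a finite simple graph of order n ≥ 4 with girth g(G) ≥ 6 (where an acyclic graph is taken to have infinite girth, hence satisfies this condition) and matching number ν(G). Then gp(μ(G)) ≤ 2n − 2·ν(G). -/

import Mathlib

open SimpleGraph

variable {V : Type*}

/-- The Mycielskian of a graph `G`: vertices are `some (Sum.inl v)` (original vertices),
`some (Sum.inr v)` (twin vertices), and `none` (the root `u*`). -/
def Mycielskian (G : SimpleGraph V) : SimpleGraph (Option (V ⊕ V)) :=
  SimpleGraph.fromRel (fun x y =>
    (∃ u v, G.Adj u v ∧ x = some (Sum.inl u) ∧ y = some (Sum.inl v)) ∨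
    (∃ u v, G.Adj u v ∧ x = some (Sum.inl u) ∧ y = some (Sum.inr v)) ∨
    (∃ u, x = some (Sum.inr u) ∧ y = none))

/-- `S` is a general position set: no shortest path between two vertices of `S`
contains a third element of `S`. -/
def IsGPSet (G : SimpleGraph V) (S : Set V) : Prop :=
  ∀ u ∈ S, ∀ v ∈ S, ∀ p : G.Walk u v, p.length = G.dist u v →
    ∀ w ∈ S, w ∈ p.support → w = u ∨ w = v

/-- The general position number of `G`: the maximum cardinality of a general position set. -/
noncomputable def gpNumber (G : SimpleGraph V) [Fintype V] : ℕ :=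
  sSup {k | ∃ S : Set V, IsGPSet G S ∧ S.ncard = k}

/-- A gp-set: a general position set of maximum cardinality. -/
def IsGpSet (G : SimpleGraph V) [Fintype V] (S : Set V) : Prop :=
  IsGPSet G S ∧ S.ncard = gpNumber G

/-- The matching number of `G`: the maximum number of pairwise disjoint edges. -/
noncomputable def matchingNumber (G : SimpleGraph V) [Fintype V] : ℕ :=
  sSup {k | ∃ M : Set (Sym2 V), M ⊆ G.edgeSet ∧
    (∀ e ∈ M, ∀ f ∈ M, e ≠ f → ∀ v : V, v ∈ e → v ∉ f) ∧ M.ncard = k}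


section Aux

variable {W : Type*} {H : SimpleGraph W}

/-- original vertex -/
abbrev vo (x : V) : Option (V ⊕ V) := some (Sum.inl x)
/-- twin vertex -/
abbrev vt (x : V) : Option (V ⊕ V) := some (Sum.inr x)

variable {G : SimpleGraph V}

@[simp] lemma myc_adj_oo {a b : V} : (Mycielskian G).Adj (vo a) (vo b) ↔ G.Adj a b := by
  constructor
  · rintro ⟨hne, h | h⟩ <;>
      rcases h with ⟨u, v, huv, h1, h2⟩ | ⟨u, v, huv, h1, h2⟩ | ⟨u, h1, h2⟩ <;>
      simp_all <;> exact huv.symm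
  · intro h
    exact ⟨by simp [h.ne], Or.inl (Or.inl ⟨a, b, h, rfl, rfl⟩)⟩

@[simp] lemma myc_adj_ot {a b : V} : (Mycielskian G).Adj (vo a) (vt b) ↔ G.Adj a b := by
  constructor
  · rintro ⟨hne, h | h⟩ <;>
      rcases h with ⟨u, v, huv, h1, h2⟩ | ⟨u, v, huv, h1, h2⟩ | ⟨u, h1, h2⟩ <;>
      simp_all <;> exact huv.symm
  · intro h
    exact ⟨by simp, Or.inl (Or.inr (Or.inl ⟨a, b, h, rfl, rfl⟩))⟩

@[simp] lemma myc_adj_to {a b : V} : (Mycielskian G).Adj (vt a) (vo b) ↔ G.Adj a b := by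
  rw [adj_comm, myc_adj_ot, adj_comm]

@[simp] lemma myc_adj_tt {a b : V} : ¬ (Mycielskian G).Adj (vt a) (vt b) := by
  rintro ⟨hne, h | h⟩ <;>
    rcases h with ⟨u, v, huv, h1, h2⟩ | ⟨u, v, huv, h1, h2⟩ | ⟨u, h1, h2⟩ <;> simp_all <;> exact huv.symm

@[simp] lemma myc_adj_tn {a : V} : (Mycielskian G).Adj (vt a) none :=
  ⟨by simp, Or.inl (Or.inr (Or.inr ⟨a, rfl, rfl⟩))⟩

@[simp] lemma myc_adj_nt {a : V} : (Mycielskian G).Adj none (vt a) := myc_adj_tn.symm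

@[simp] lemma myc_adj_on {a : V} : ¬ (Mycielskian G).Adj (vo a) none := by
  rintro ⟨hne, h | h⟩ <;>
    rcases h with ⟨u, v, huv, h1, h2⟩ | ⟨u, v, huv, h1, h2⟩ | ⟨u, h1, h2⟩ <;> simp_all <;> exact huv.symm

@[simp] lemma myc_adj_no {a : V} : ¬ (Mycielskian G).Adj none (vo a) := by
  intro h; exact myc_adj_on h.symm

@[simp] lemma myc_adj_nn : ¬ (Mycielskian G).Adj none (none : Option (V ⊕ V)) := by
  rintro ⟨hne, _⟩; exact hne rfl


variable {a b c d e : V}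

lemma egirth_le_three (hab : G.Adj a b) (hbc : G.Adj b c) (hca : G.Adj c a) :
    G.egirth ≤ 3 := by
  have hc : (Walk.cons hab (Walk.cons hbc (Walk.cons hca Walk.nil))).IsCycle := by
    have h1 : a ≠ b := hab.ne
    have h2 : b ≠ c := hbc.ne
    have h3 : c ≠ a := hca.ne
    simp [Walk.isCycle_def, Walk.isTrail_def, Sym2.eq_iff, h1, h2, h3, h1.symm, h2.symm, h3.symm]
  have := le_egirth.mp (le_refl G.egirth) a _ hc
  simpa using (le_egirth.mp (le_refl G.egirth) a _ hc)

lemma girth_no_tri (hg : 6 ≤ G.egirth) (hab : G.Adj a b) (hbc : G.Adj b c) : ¬ G.Adj a c := by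
  intro hac
  have := egirth_le_three hab hbc hac.symm
  have : (6 : ℕ∞) ≤ 3 := le_trans hg this
  norm_num at this

lemma girth_no_c4 (hg : 6 ≤ G.egirth) (hab : G.Adj a b) (hbc : G.Adj b c) (hcd : G.Adj c d)
    (hda : G.Adj d a) (hac : a ≠ c) (hbd : b ≠ d) : False := by
  have hc : (Walk.cons hab (Walk.cons hbc (Walk.cons hcd (Walk.cons hda Walk.nil)))).IsCycle := by
    have h1 : a ≠ b := hab.ne
    have h2 : b ≠ c := hbc.ne
    have h3 : c ≠ d := hcd.ne
    have h4 : d ≠ a := hda.ne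
    simp [Walk.isCycle_def, Walk.isTrail_def, Sym2.eq_iff, h1, h2, h3, h4, h1.symm, h2.symm,
      h3.symm, h4.symm, hac, hbd, hac.symm, hbd.symm]
  have h6 := le_egirth.mp (le_refl G.egirth) a _ hc
  have : (6 : ℕ∞) ≤ 4 := le_trans hg (by simpa using h6)
  norm_num at this

lemma girth_no_c5 (hg : 6 ≤ G.egirth) (hab : G.Adj a b) (hbc : G.Adj b c) (hcd : G.Adj c d)
    (hde : G.Adj d e) (hea : G.Adj e a) (hac : a ≠ c) (had : a ≠ d) (hbd : b ≠ d)
    (hbe : b ≠ e) (hce : c ≠ e) : False := by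
  have hc : (Walk.cons hab (Walk.cons hbc (Walk.cons hcd (Walk.cons hde
      (Walk.cons hea Walk.nil))))).IsCycle := by
    have h1 : a ≠ b := hab.ne
    have h2 : b ≠ c := hbc.ne
    have h3 : c ≠ d := hcd.ne
    have h4 : d ≠ e := hde.ne
    have h5 : e ≠ a := hea.ne
    simp [Walk.isCycle_def, Walk.isTrail_def, Sym2.eq_iff, h1, h2, h3, h4, h5, h1.symm, h2.symm,
      h3.symm, h4.symm, h5.symm, hac, had, hbd, hbe, hce, hac.symm, had.symm, hbd.symm, hbe.symm,
      hce.symm]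
  have h6 := le_egirth.mp (le_refl G.egirth) a _ hc
  have : (6 : ℕ∞) ≤ 5 := le_trans hg (by simpa using h6)
  norm_num at this


lemma dist_eq_of_walk_two {a b : W} (p : H.Walk a b) (hp : p.length = 2) (h0 : a ≠ b)
    (h1 : ¬ H.Adj a b) : H.dist a b = 2 := by
  have hle : H.dist a b ≤ 2 := hp ▸ SimpleGraph.dist_le p
  have hr : H.Reachable a b := ⟨p⟩
  obtain ⟨q, hq⟩ := hr.exists_walk_length_eq_dist
  rcases q with _ | ⟨h, q⟩
  · exact absurd rfl h0
  rcases q with _ | ⟨h', q⟩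
  · exact absurd h h1
  have : 2 ≤ H.dist a b := by rw [← hq]; simp [Walk.length_cons]
  omega

lemma dist_eq_of_walk_three {a b : W} (p : H.Walk a b) (hp : p.length = 3) (h0 : a ≠ b)
    (h1 : ¬ H.Adj a b) (h2 : ∀ m, ¬ (H.Adj a m ∧ H.Adj m b)) : H.dist a b = 3 := by
  have hle : H.dist a b ≤ 3 := hp ▸ SimpleGraph.dist_le p
  have hr : H.Reachable a b := ⟨p⟩
  obtain ⟨q, hq⟩ := hr.exists_walk_length_eq_dist
  rcases q with _ | ⟨h, q⟩
  · exact absurd rfl h0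
  rcases q with _ | ⟨h', q⟩
  · exact absurd h h1
  rcases q with _ | ⟨h'', q⟩
  · exact absurd ⟨h, h'⟩ (h2 _)
  have : 3 ≤ H.dist a b := by rw [← hq]; simp [Walk.length_cons]
  omega

lemma dist_eq_of_walk_four {a b : W} (p : H.Walk a b) (hp : p.length = 4) (h0 : a ≠ b)
    (h1 : ¬ H.Adj a b) (h2 : ∀ m, ¬ (H.Adj a m ∧ H.Adj m b))
    (h3 : ∀ m w, ¬ (H.Adj a m ∧ H.Adj m w ∧ H.Adj w b)) : H.dist a b = 4 := by
  have hle : H.dist a b ≤ 4 := hp ▸ SimpleGraph.dist_le p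
  have hr : H.Reachable a b := ⟨p⟩
  obtain ⟨q, hq⟩ := hr.exists_walk_length_eq_dist
  rcases q with _ | ⟨h, q⟩
  · exact absurd rfl h0
  rcases q with _ | ⟨h', q⟩
  · exact absurd h h1
  rcases q with _ | ⟨h'', q⟩
  · exact absurd ⟨h, h'⟩ (h2 _)
  rcases q with _ | ⟨h''', q⟩
  · exact absurd ⟨h, h', h''⟩ (h3 _ _)
  have : 4 ≤ H.dist a b := by rw [← hq]; simp [Walk.length_cons]
  omega


lemma gp_violation {H : SimpleGraph V} {S : Set V} (hS : IsGPSet H S) {a b w : V}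
    (ha : a ∈ S) (hb : b ∈ S) (hw : w ∈ S) (p : H.Walk a b)
    (hlen : p.length = H.dist a b) (hsup : w ∈ p.support) (hwa : w ≠ a) (hwb : w ≠ b) :
    False := by
  rcases hS a ha b hb p hlen w hw hsup with h | h
  exacts [hwa h, hwb h]



variable [Fintype V] [DecidableEq V]

lemma sum_wt_bound (f : V → ℕ) (hf : ∀ v, f v ≤ 2) (M : Finset (Sym2 V)) :
    ∀ T : Finset V, (∀ e ∈ M, ¬ e.IsDiag) → (∀ e ∈ M, ∀ v ∈ e, v ∈ T) →
    (∀ e ∈ M, ∀ f' ∈ M, e ≠ f' → ∀ v : V, v ∈ e → v ∉ f') →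
    (∀ e ∈ M, ∀ x y : V, e = s(x, y) → f x + f y ≤ 2) →
    (∑ v ∈ T, f v) + 2 * M.card ≤ 2 * T.card := by
  classical
  induction M using Finset.induction with
  | empty =>
      intro T _ _ _ _
      simpa [mul_comm] using Finset.sum_le_card_nsmul T f 2 (fun v _ => hf v)
  | insert e M' hnm ih =>
      intro T hdiag hT hdisj hedge
      induction e using Sym2.ind with
      | _ x y =>
      have hxy : x ≠ y := by
        have := hdiag _ (Finset.mem_insert_self _ _)
        simpa [Sym2.isDiag_iff_proj_eq] using this
      have hxT : x ∈ T := hT _ (Finset.mem_insert_self _ _) x (by simp)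
      have hyT : y ∈ T := hT _ (Finset.mem_insert_self _ _) y (by simp)
      set T' := (T.erase x).erase y with hT'
      have hyTx : y ∈ T.erase x := Finset.mem_erase.mpr ⟨hxy.symm, hyT⟩
      have hsum : (∑ v ∈ T, f v) = f x + (f y + ∑ v ∈ T', f v) := by
        rw [← Finset.add_sum_erase _ _ hxT, ← Finset.add_sum_erase _ _ hyTx]
      have hcard : T.card = T'.card + 2 := by
        rw [hT', Finset.card_erase_of_mem hyTx, Finset.card_erase_of_mem hxT]
        have h1 : 1 ≤ T.card := Finset.card_pos.mpr ⟨x, hxT⟩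
        have h2 : 2 ≤ T.card := by
          have : ({x, y} : Finset V) ⊆ T := by
            intro v hv; rcases Finset.mem_insert.mp hv with rfl | hv
            · exact hxT
            · exact (Finset.mem_singleton.mp hv) ▸ hyT
          have := Finset.card_le_card this
          rwa [Finset.card_pair hxy] at this
        omega
      have hih := ih T' (fun e he => hdiag e (Finset.mem_insert_of_mem he))
        (fun e he v hv => by
          have hvT := hT e (Finset.mem_insert_of_mem he) v hv
          have hne : e ≠ s(x, y) := by rintro rfl; exact hnm he
          have hv' := hdisj e (Finset.mem_insert_of_mem he) (s(x,y))
            (Finset.mem_insert_self _ _) hne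
          have hvxy := hv' v hv
          simp only [Sym2.mem_iff, not_or] at hvxy
          exact Finset.mem_erase.mpr ⟨hvxy.2, Finset.mem_erase.mpr ⟨hvxy.1, hvT⟩⟩)
        (fun e he f' hf' hne v => hdisj e (Finset.mem_insert_of_mem he) f'
          (Finset.mem_insert_of_mem hf') hne v)
        (fun e he => hedge e (Finset.mem_insert_of_mem he))
      have hfxy : f x + f y ≤ 2 := hedge _ (Finset.mem_insert_self _ _) x y rfl
      rw [Finset.card_insert_of_notMem hnm]
      omega


end Aux

section Aux2
variable [Fintype V]

lemma gpNumber_le {G : SimpleGraph V} {b : ℕ}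
    (h : ∀ S : Set V, IsGPSet G S → S.ncard ≤ b) : gpNumber G ≤ b := by
  apply csSup_le
  · exact ⟨0, ∅, fun u hu => absurd hu (Set.notMem_empty u), by simp⟩
  · rintro k ⟨S, hS, rfl⟩
    exact h S hS

lemma exists_max_matching (G : SimpleGraph V) :
    ∃ M : Finset (Sym2 V), M.card = matchingNumber G ∧ (∀ e ∈ M, e ∈ G.edgeSet) ∧
      (∀ e ∈ M, ∀ f ∈ M, e ≠ f → ∀ v : V, v ∈ e → v ∉ f) := by
  classical
  have hne : {k | ∃ M : Set (Sym2 V), M ⊆ G.edgeSet ∧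
      (∀ e ∈ M, ∀ f ∈ M, e ≠ f → ∀ v : V, v ∈ e → v ∉ f) ∧ M.ncard = k}.Nonempty :=
    ⟨0, ∅, by simp, by simp, by simp⟩
  have hbdd : BddAbove {k | ∃ M : Set (Sym2 V), M ⊆ G.edgeSet ∧
      (∀ e ∈ M, ∀ f ∈ M, e ≠ f → ∀ v : V, v ∈ e → v ∉ f) ∧ M.ncard = k} := by
    refine ⟨Fintype.card (Sym2 V), ?_⟩
    rintro k ⟨M, _, _, rfl⟩
    have := Set.ncard_le_ncard (Set.subset_univ M) Set.finite_univ
    simpa [Set.ncard_univ, Nat.card_eq_fintype_card] using this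
  obtain ⟨M, hMsub, hMdisj, hMcard⟩ := Nat.sSup_mem hne hbdd
  refine ⟨(Set.toFinite M).toFinset, ?_, ?_, ?_⟩
  · show _ = sSup _
    rw [← hMcard, Set.ncard_eq_toFinset_card', Set.toFinite_toFinset]
  · intro e he; exact hMsub ((Set.Finite.mem_toFinset _).mp he)
  · intro e he f hf hne v hv
    exact hMdisj e ((Set.Finite.mem_toFinset _).mp he) f ((Set.Finite.mem_toFinset _).mp hf) hne v hv

lemma ncard_le_split [DecidableEq V] (S : Set (Option (V ⊕ V))) (A B : Finset V)
    (hA : ∀ v, vo v ∈ S → v ∈ A) (hB : ∀ v, vt v ∈ S → v ∈ B) (r : ℕ)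
    (hr : none ∈ S → 1 ≤ r) :
    S.ncard ≤ A.card + B.card + r := by
  classical
  by_cases hn : (none : Option (V ⊕ V)) ∈ S
  · have hsub : S.toFinset ⊆ A.image vo ∪ B.image vt ∪ ({none} : Finset (Option (V ⊕ V))) := by
      intro x hx
      rw [Set.mem_toFinset] at hx
      match x with
      | none => simp
      | some (Sum.inl v) =>
          exact Finset.mem_union_left _ (Finset.mem_union_left _
            (Finset.mem_image.mpr ⟨v, hA v hx, rfl⟩))
      | some (Sum.inr v) =>
          exact Finset.mem_union_left _ (Finset.mem_union_right _
            (Finset.mem_image.mpr ⟨v, hB v hx, rfl⟩))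
    have h1 := Finset.card_le_card hsub
    have h2 := Finset.card_union_le (A.image vo ∪ B.image vt) ({none} : Finset (Option (V ⊕ V)))
    have h3 := Finset.card_union_le (A.image vo) (B.image vt)
    have h4 : (A.image vo).card ≤ A.card := Finset.card_image_le
    have h5 : (B.image vt).card ≤ B.card := Finset.card_image_le
    have h6 : ({none} : Finset (Option (V ⊕ V))).card = 1 := Finset.card_singleton _
    have h7 := hr hn
    rw [Set.ncard_eq_toFinset_card']
    omega
  · have hsub : S.toFinset ⊆ A.image vo ∪ B.image vt := by
      intro x hx
      rw [Set.mem_toFinset] at hx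
      match x with
      | none => exact absurd hx hn
      | some (Sum.inl v) =>
          exact Finset.mem_union_left _ (Finset.mem_image.mpr ⟨v, hA v hx, rfl⟩)
      | some (Sum.inr v) =>
          exact Finset.mem_union_right _ (Finset.mem_image.mpr ⟨v, hB v hx, rfl⟩)
    have h1 := Finset.card_le_card hsub
    have h3 := Finset.card_union_le (A.image vo) (B.image vt)
    have h4 : (A.image vo).card ≤ A.card := Finset.card_image_le
    have h5 : (B.image vt).card ≤ B.card := Finset.card_image_le
    rw [Set.ncard_eq_toFinset_card']
    omega



end Aux2

/-- For a graph `G` of order `n ≥ 4` with girth at least `6` (acyclic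
graphs have infinite girth, so qualify) and matching number `ν(G)`,
`gp(μ(G)) ≤ 2n - 2ν(G)`. -/
theorem gpNumber_mycielskian_girth_bound [Fintype V] (G : SimpleGraph V)
    (hn : 4 ≤ Fintype.card V) (hg : 6 ≤ G.egirth) :
    gpNumber (Mycielskian G) ≤ 2 * Fintype.card V - 2 * matchingNumber G := by
  classical
  obtain ⟨M, hMcard, hMedge, hMdisj⟩ := exists_max_matching G
  have key : ∀ S : Set (Option (V ⊕ V)), IsGPSet (Mycielskian G) S →
      S.ncard + 2 * M.card ≤ 2 * Fintype.card V := by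
    intro S hS
    set n := Fintype.card V with hndef
    set A : Finset V := Finset.univ.filter (fun x => vo x ∈ S) with hA
    set B : Finset V := Finset.univ.filter (fun x => vt x ∈ S) with hB
    have hAmem : ∀ x : V, x ∈ A ↔ vo x ∈ S := by intro x; simp [hA]
    have hBmem : ∀ x : V, x ∈ B ↔ vt x ∈ S := by intro x; simp [hB]
    set V₀ : Finset V := Finset.univ.filter (fun x : V => ∃ w, G.Adj x w) with hV₀
    set Iso : Finset V := Finset.univ.filter (fun x : V => ¬ ∃ w, G.Adj x w) with hIso
    have hV₀mem : ∀ x : V, x ∈ V₀ ↔ ∃ w, G.Adj x w := by intro x; simp [hV₀]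
    have hnsplit : V₀.card + Iso.card = n := by
      rw [hV₀, hIso, Finset.card_filter_add_card_filter_not, Finset.card_univ]
    have h2nu : 2 * M.card ≤ V₀.card := by
      have hsw := sum_wt_bound (fun _ => (1 : ℕ)) (fun v => one_le_two) M V₀
        (fun e he => (G.not_isDiag_of_mem_edgeSet (hMedge e he)))
        (fun e he => by
          induction e using Sym2.ind with
          | _ x y =>
            intro v hv
            have hadj : G.Adj x y := (SimpleGraph.mem_edgeSet G).mp (hMedge _ he)
            rcases Sym2.mem_iff.mp hv with rfl | rfl
            · exact (hV₀mem v).mpr ⟨y, hadj⟩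
            · exact (hV₀mem v).mpr ⟨x, hadj.symm⟩)
        hMdisj
        (fun e he x y hxy => by simp)
      simp only [Finset.sum_const, smul_eq_mul, mul_one] at hsw
      omega
    -- basic injectivity facts
    have hvo_ne_vt : ∀ x y : V, vo x ≠ vt y := by intro x y h; simp at h
    have hvt_ne_vo : ∀ x y : V, vt x ≠ vo y := by intro x y h; simp at h
    -- middle dischargers
    have no2oo : ∀ x y : V, (¬ ∃ m, G.Adj x m ∧ G.Adj m y) →
        ∀ m, ¬ ((Mycielskian G).Adj (vo x) m ∧ (Mycielskian G).Adj m (vo y)) := by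
      intro x y hno m
      rintro ⟨h1, h2⟩
      rcases m with _ | (c | c)
      · exact myc_adj_on h1
      · exact hno ⟨c, myc_adj_oo.mp h1, myc_adj_oo.mp h2⟩
      · exact hno ⟨c, myc_adj_ot.mp h1, myc_adj_to.mp h2⟩
    have no2ot : ∀ x z : V, (¬ ∃ m, G.Adj x m ∧ G.Adj m z) →
        ∀ m, ¬ ((Mycielskian G).Adj (vo x) m ∧ (Mycielskian G).Adj m (vt z)) := by
      intro x z hno m
      rintro ⟨h1, h2⟩
      rcases m with _ | (c | c)
      · exact myc_adj_on h1
      · exact hno ⟨c, myc_adj_oo.mp h1, myc_adj_ot.mp h2⟩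
      · exact myc_adj_tt h2
    have no3oo : ∀ x y : V, (¬ ∃ m w, G.Adj x m ∧ G.Adj m w ∧ G.Adj w y) →
        ∀ m w, ¬ ((Mycielskian G).Adj (vo x) m ∧ (Mycielskian G).Adj m w ∧
          (Mycielskian G).Adj w (vo y)) := by
      intro x y hno m w
      rintro ⟨h1, h2, h3⟩
      rcases m with _ | (c | c)
      · exact myc_adj_on h1
      · rcases w with _ | (d | d)
        · exact myc_adj_on h2
        · exact hno ⟨c, d, myc_adj_oo.mp h1, myc_adj_oo.mp h2, myc_adj_oo.mp h3⟩
        · exact hno ⟨c, d, myc_adj_oo.mp h1, myc_adj_ot.mp h2, myc_adj_to.mp h3⟩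
      · rcases w with _ | (d | d)
        · exact myc_adj_no h3
        · exact hno ⟨c, d, myc_adj_ot.mp h1, myc_adj_to.mp h2, myc_adj_oo.mp h3⟩
        · exact myc_adj_tt h2
    -- distance computations
    have dtt : ∀ z t : V, z ≠ t → (Mycielskian G).dist (vt z) (vt t) = 2 := by
      intro z t hzt
      exact dist_eq_of_walk_two (Walk.cons myc_adj_tn (Walk.cons myc_adj_nt Walk.nil))
        (by simp) (by simp [hzt]) (by simp)
    have dox : ∀ x y : V, G.Adj x y → (Mycielskian G).dist (vo x) (vt x) = 2 := by
      intro x y hxy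
      exact dist_eq_of_walk_two
        (Walk.cons (myc_adj_oo.mpr hxy) (Walk.cons (myc_adj_ot.mpr hxy.symm) Walk.nil))
        (by simp) (by simp) (by simp)
    have doo2 : ∀ x y m : V, x ≠ y → ¬ G.Adj x y → G.Adj x m → G.Adj m y →
        (Mycielskian G).dist (vo x) (vo y) = 2 := by
      intro x y m hxy hnadj hxm hmy
      exact dist_eq_of_walk_two
        (Walk.cons (myc_adj_oo.mpr hxm) (Walk.cons (myc_adj_oo.mpr hmy) Walk.nil))
        (by simp) (by simp [hxy]) (by simp [hnadj])
    have dot2 : ∀ x z m : V, ¬ G.Adj x z → G.Adj x m → G.Adj m z →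
        (Mycielskian G).dist (vo x) (vt z) = 2 := by
      intro x z m hnadj hxm hmz
      exact dist_eq_of_walk_two
        (Walk.cons (myc_adj_oo.mpr hxm) (Walk.cons (myc_adj_ot.mpr hmz) Walk.nil))
        (by simp) (by simp) (by simp [hnadj])
    have doo3 : ∀ x y a b : V, x ≠ y → ¬ G.Adj x y → (¬ ∃ m, G.Adj x m ∧ G.Adj m y) →
        G.Adj x a → G.Adj a b → G.Adj b y → (Mycielskian G).dist (vo x) (vo y) = 3 := by
      intro x y a b hxy hnadj hnocom hxa hab hby
      exact dist_eq_of_walk_three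
        (Walk.cons (myc_adj_oo.mpr hxa) (Walk.cons (myc_adj_oo.mpr hab)
          (Walk.cons (myc_adj_oo.mpr hby) Walk.nil)))
        (by simp) (by simp [hxy]) (by simp [hnadj]) (no2oo x y hnocom)
    have dot3 : ∀ x z c : V, ¬ G.Adj x z → (¬ ∃ m, G.Adj x m ∧ G.Adj m z) → G.Adj x c →
        (Mycielskian G).dist (vo x) (vt z) = 3 := by
      intro x z c hnadj hnocom hxc
      exact dist_eq_of_walk_three
        (Walk.cons (myc_adj_ot.mpr hxc) (Walk.cons myc_adj_tn (Walk.cons myc_adj_nt Walk.nil)))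
        (by simp) (by simp) (by simp [hnadj]) (no2ot x z hnocom)
    have doo4 : ∀ x y cx cy : V, x ≠ y → ¬ G.Adj x y → (¬ ∃ m, G.Adj x m ∧ G.Adj m y) →
        (¬ ∃ m w, G.Adj x m ∧ G.Adj m w ∧ G.Adj w y) → G.Adj x cx → G.Adj y cy →
        (Mycielskian G).dist (vo x) (vo y) = 4 := by
      intro x y cx cy hxy hnadj hnocom hnochain hcx hcy
      exact dist_eq_of_walk_four
        (Walk.cons (myc_adj_ot.mpr hcx) (Walk.cons myc_adj_tn (Walk.cons myc_adj_nt
          (Walk.cons (myc_adj_to.mpr hcy.symm) Walk.nil))))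
        (by simp) (by simp [hxy]) (by simp [hnadj]) (no2oo x y hnocom) (no3oo x y hnochain)
    -- fact V1 : a doubled vertex has no S-neighbour among originals
    have hV1 : ∀ x y : V, vo x ∈ S → vt x ∈ S → G.Adj x y → vo y ∉ S := by
      intro x y hx hx' hxy hy
      exact gp_violation hS hx hx' hy
        (Walk.cons (myc_adj_oo.mpr hxy) (Walk.cons (myc_adj_ot.mpr hxy.symm) Walk.nil))
        (by rw [dox x y hxy]; simp) (by simp)
        (by intro h; simp at h; exact hxy.ne h.symm) (by simp)
    by_cases hroot : (none : Option (V ⊕ V)) ∈ S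
    · -- CASE I : the root belongs to S
      have hsplit1 : S.ncard ≤ A.card + B.card + 1 :=
        ncard_le_split S A B (fun x hx => (hAmem x).mpr hx)
          (fun x hx => (hBmem x).mpr hx) 1 (fun _ => le_refl 1)
      have hB1 : ∀ z t : V, vt z ∈ S → vt t ∈ S → z = t := by
        intro z t hz ht
        by_contra hzt
        exact gp_violation hS hz ht hroot
          (Walk.cons myc_adj_tn (Walk.cons myc_adj_nt Walk.nil))
          (by rw [dtt z t hzt]; simp) (by simp) (by simp) (by simp)
      have hBcard : B.card ≤ 1 := Finset.card_le_one.mpr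
        (fun a ha b hb => hB1 a b ((hBmem a).mp ha) ((hBmem b).mp hb))
      set A₀ : Finset V := A.filter (fun x : V => ∃ w, G.Adj x w) with hA₀
      have hA₀mem : ∀ x : V, x ∈ A₀ ↔ (vo x ∈ S ∧ ∃ w, G.Adj x w) := by
        intro x; simp [hA₀, hA]
      have hA₀V₀ : A₀ ⊆ V₀ := by
        intro x hx; exact (hV₀mem x).mpr ((hA₀mem x).mp hx).2
      have hAIcard : A.card ≤ A₀.card + Iso.card := by
        have h1 := Finset.card_filter_add_card_filter_not
          (s := A) (p := fun x : V => ∃ w, G.Adj x w)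
        rw [← hA₀] at h1
        have h2 : (A.filter (fun x : V => ¬ ∃ w, G.Adj x w)).card ≤ Iso.card := by
          apply Finset.card_le_card
          rw [hIso]
          exact Finset.filter_subset_filter _ (Finset.subset_univ A)
        omega
      -- any two vertices of A₀ are within distance 3 in G
      have hA3 : ∀ x y : V, vo x ∈ S → vo y ∈ S → x ≠ y →
          ∀ cx cy : V, G.Adj x cx → G.Adj y cy →
          G.Adj x y ∨ (∃ m, G.Adj x m ∧ G.Adj m y) ∨
            (∃ m w, G.Adj x m ∧ G.Adj m w ∧ G.Adj w y) := by
        intro x y hx hy hxy cx cy hcx hcy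
        by_contra hcon
        have h1 : ¬ G.Adj x y := fun h => hcon (Or.inl h)
        have h2 : ¬ ∃ m, G.Adj x m ∧ G.Adj m y := fun h => hcon (Or.inr (Or.inl h))
        have h3 : ¬ ∃ m w, G.Adj x m ∧ G.Adj m w ∧ G.Adj w y :=
          fun h => hcon (Or.inr (Or.inr h))
        exact gp_violation hS hx hy hroot
          (Walk.cons (myc_adj_ot.mpr hcx) (Walk.cons myc_adj_tn (Walk.cons myc_adj_nt
            (Walk.cons (myc_adj_to.mpr hcy.symm) Walk.nil))))
          (by rw [doo4 x y cx cy hxy h1 h2 h3 hcx hcy]; simp)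
          (by simp) (by simp) (by simp)
      -- common neighbours of non-adjacent S-pairs are excluded from S (both copies)
      have hexcl : ∀ x y m : V, vo x ∈ S → vo y ∈ S → x ≠ y → ¬ G.Adj x y →
          G.Adj x m → G.Adj m y → vo m ∉ S ∧ vt m ∉ S := by
        intro x y m hx hy hxy hnadj hxm hmy
        have hd := doo2 x y m hxy hnadj hxm hmy
        constructor
        · intro hm
          exact gp_violation hS hx hy hm
            (Walk.cons (myc_adj_oo.mpr hxm) (Walk.cons (myc_adj_oo.mpr hmy) Walk.nil))
            (by rw [hd]; simp) (by simp)
            (by intro h; simp at h; exact hxm.ne h.symm)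
            (by intro h; simp at h; exact hmy.ne h)
        · intro hm
          exact gp_violation hS hx hy hm
            (Walk.cons (myc_adj_ot.mpr hxm) (Walk.cons (myc_adj_to.mpr hmy) Walk.nil))
            (by rw [hd]; simp) (by simp) (by simp) (by simp)
      -- interior vertices of geodesics of length 3 are excluded from A
      have hexcl3 : ∀ x y a b : V, vo x ∈ S → vo y ∈ S → x ≠ y → ¬ G.Adj x y →
          (¬ ∃ m, G.Adj x m ∧ G.Adj m y) → G.Adj x a → G.Adj a b → G.Adj b y →
          vo a ∉ S ∧ vo b ∉ S := by
        intro x y a b hx hy hxy hnadj hnocom hxa hab hby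
        have hd := doo3 x y a b hxy hnadj hnocom hxa hab hby
        have hax : a ≠ x := hxa.ne'
        have hay : a ≠ y := by rintro rfl; exact hnadj hxa
        have hbx : b ≠ x := by rintro rfl; exact hnadj hby
        have hby' : b ≠ y := hby.ne
        constructor
        · intro hm
          exact gp_violation hS hx hy hm
            (Walk.cons (myc_adj_oo.mpr hxa) (Walk.cons (myc_adj_oo.mpr hab)
              (Walk.cons (myc_adj_oo.mpr hby) Walk.nil)))
            (by rw [hd]; simp) (by simp)
            (by intro h; simp at h; exact hax h)
            (by intro h; simp at h; exact hay h)
        · intro hm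
          exact gp_violation hS hx hy hm
            (Walk.cons (myc_adj_oo.mpr hxa) (Walk.cons (myc_adj_oo.mpr hab)
              (Walk.cons (myc_adj_oo.mpr hby) Walk.nil)))
            (by rw [hd]; simp) (by simp)
            (by intro h; simp at h; exact hbx h)
            (by intro h; simp at h; exact hby' h)
      by_cases hsmall : A₀.card ≤ 2
      · omega
      · -- A₀ has at least 3 elements
        have hconc2 : ∀ s t : V, s ≠ t → s ∈ V₀ → t ∈ V₀ → s ∉ A → t ∉ A →
            S.ncard + 2 * M.card ≤ 2 * n := by
          intro s t hst hsV htV hsA htA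
          have hsA₀ : s ∉ A₀ := fun h => hsA (Finset.mem_of_mem_filter s h)
          have htA₀ : t ∉ A₀ := fun h => htA (Finset.mem_of_mem_filter t h)
          have hins : insert s (insert t A₀) ⊆ V₀ := by
            intro z hz
            rcases Finset.mem_insert.mp hz with rfl | hz
            · exact hsV
            · rcases Finset.mem_insert.mp hz with rfl | hz
              · exact htV
              · exact hA₀V₀ hz
          have hcard2 : A₀.card + 2 ≤ V₀.card := by
            have h1 : (insert s (insert t A₀)).card = A₀.card + 2 := by
              rw [Finset.card_insert_of_notMem, Finset.card_insert_of_notMem htA₀]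
              intro h
              rcases Finset.mem_insert.mp h with h | h
              · exact hst h
              · exact hsA₀ h
            have h2 := Finset.card_le_card hins
            omega
          omega
        obtain ⟨x1, hx1⟩ := Finset.card_pos.mp (show 0 < A₀.card by omega)
        obtain ⟨y1, hy1'⟩ := Finset.card_pos.mp (show 0 < (A₀.erase x1).card by
          rw [Finset.card_erase_of_mem hx1]; omega)
        obtain ⟨hy1x, hy1⟩ := Finset.mem_erase.mp hy1'
        obtain ⟨z1, hz1'⟩ := Finset.card_pos.mp (show 0 < ((A₀.erase x1).erase y1).card by
          rw [Finset.card_erase_of_mem hy1', Finset.card_erase_of_mem hx1]; omega)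
        obtain ⟨hz1y, hz1''⟩ := Finset.mem_erase.mp hz1'
        obtain ⟨hz1x, hz1⟩ := Finset.mem_erase.mp hz1''
        have hSmem : ∀ w : V, w ∈ A₀ → vo w ∈ S := fun w hw => ((hA₀mem w).mp hw).1
        have hNbr : ∀ w : V, w ∈ A₀ → ∃ c, G.Adj w c := fun w hw => ((hA₀mem w).mp hw).2
        by_cases hd3pair : ∃ x y : V, x ∈ A₀ ∧ y ∈ A₀ ∧ x ≠ y ∧ ¬ G.Adj x y ∧
            ¬ ∃ m, G.Adj x m ∧ G.Adj m y
        · obtain ⟨x, y, hxA, hyA, hxy, hnadj, hnocom⟩ := hd3pair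
          obtain ⟨cx, hcx⟩ := hNbr x hxA
          obtain ⟨cy, hcy⟩ := hNbr y hyA
          have h3 := hA3 x y (hSmem x hxA) (hSmem y hyA) hxy cx cy hcx hcy
          rcases h3 with h | h | ⟨a, b, h1, h2, h3⟩
          · exact absurd h hnadj
          · exact absurd h hnocom
          · have hests := hexcl3 x y a b (hSmem x hxA) (hSmem y hyA) hxy hnadj hnocom h1 h2 h3
            refine hconc2 a b h2.ne ((hV₀mem a).mpr ⟨b, h2⟩) ((hV₀mem b).mpr ⟨a, h2.symm⟩) ?_ ?_
            · intro h; exact hests.1 ((hAmem a).mp h)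
            · intro h; exact hests.2 ((hAmem b).mp h)
        · -- every pair of A₀ is adjacent or has a common neighbour
          have hac : ∀ x y : V, x ∈ A₀ → y ∈ A₀ → x ≠ y →
              G.Adj x y ∨ ∃ m, G.Adj x m ∧ G.Adj m y := by
            intro x y hxA hyA hxy
            by_cases hadj : G.Adj x y
            · exact Or.inl hadj
            · by_cases hcom : ∃ m, G.Adj x m ∧ G.Adj m y
              · exact Or.inr hcom
              · exact absurd ⟨x, y, hxA, hyA, hxy, hadj, hcom⟩ hd3pair
          have hnonadj : ∃ x y : V, x ∈ A₀ ∧ y ∈ A₀ ∧ x ≠ y ∧ ¬ G.Adj x y := by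
            by_contra hall
            push_neg at hall
            have e1 : G.Adj x1 y1 := hall x1 y1 hx1 hy1 (Ne.symm hy1x)
            have e2 : G.Adj y1 z1 := hall y1 z1 hy1 hz1 (Ne.symm hz1y)
            have e3 : G.Adj x1 z1 := hall x1 z1 hx1 hz1 (Ne.symm hz1x)
            exact girth_no_tri hg e1 e2 e3
          obtain ⟨x₀, y₀, hx₀, hy₀, hxy₀, hnadj₀⟩ := hnonadj
          obtain ⟨m₀, hm₀1, hm₀2⟩ := (hac x₀ y₀ hx₀ hy₀ hxy₀).resolve_left hnadj₀
          have hm₀excl := hexcl x₀ y₀ m₀ (hSmem x₀ hx₀) (hSmem y₀ hy₀) hxy₀ hnadj₀ hm₀1 hm₀2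
          have hm₀V : m₀ ∈ V₀ := (hV₀mem m₀).mpr ⟨y₀, hm₀2⟩
          have hm₀A : m₀ ∉ A := fun h => hm₀excl.1 ((hAmem m₀).mp h)
          have hm₀A₀ : m₀ ∉ A₀ := fun h => hm₀A (Finset.mem_of_mem_filter m₀ h)
          by_cases hsec : ∃ x y m : V, x ∈ A₀ ∧ y ∈ A₀ ∧ x ≠ y ∧ ¬ G.Adj x y ∧
              G.Adj x m ∧ G.Adj m y ∧ m ≠ m₀
          · obtain ⟨x, y, m, hxA, hyA, hxy, hnadj, hxm, hmy, hmm₀⟩ := hsec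
            have hme := hexcl x y m (hSmem x hxA) (hSmem y hyA) hxy hnadj hxm hmy
            exact hconc2 m m₀ hmm₀ ((hV₀mem m).mpr ⟨y, hmy⟩) hm₀V
              (fun h => hme.1 ((hAmem m).mp h)) hm₀A
          · have hall_m : ∀ x y m : V, x ∈ A₀ → y ∈ A₀ → x ≠ y → ¬ G.Adj x y →
                G.Adj x m → G.Adj m y → m = m₀ := by
              intro x y m h1 h2 h3 h4 h5 h6
              by_contra hne'
              exact hsec ⟨x, y, m, h1, h2, h3, h4, h5, h6, hne'⟩
            -- A₀ is independent
            have hindep : ∀ x y : V, x ∈ A₀ → y ∈ A₀ → x ≠ y → ¬ G.Adj x y := by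
              intro x y hxA hyA hxy hadj
              obtain ⟨z', hz''⟩ := Finset.card_pos.mp
                (show 0 < ((A₀.erase x).erase y).card by
                  rw [Finset.card_erase_of_mem (Finset.mem_erase.mpr ⟨Ne.symm hxy, hyA⟩),
                    Finset.card_erase_of_mem hxA]
                  omega)
              obtain ⟨hz'y, hz'rest⟩ := Finset.mem_erase.mp hz''
              obtain ⟨hz'x, hz'A⟩ := Finset.mem_erase.mp hz'rest
              by_cases hzx : G.Adj z' x <;> by_cases hzy : G.Adj z' y
              · exact girth_no_tri hg hzx hadj hzy
              · have hxm0 : x = m₀ := hall_m z' y x hz'A hyA hz'y hzy hzx hadj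
                exact hm₀A ((hAmem x).mpr (hSmem x hxA) |> fun h => hxm0 ▸ h)
              · have hym0 : y = m₀ := hall_m z' x y hz'A hxA hz'x hzx hzy hadj.symm
                exact hm₀A ((hAmem y).mpr (hSmem y hyA) |> fun h => hym0 ▸ h)
              · obtain ⟨m1, hm11, hm12⟩ := (hac z' x hz'A hxA hz'x).resolve_left hzx
                obtain ⟨m2, hm21, hm22⟩ := (hac z' y hz'A hyA hz'y).resolve_left hzy
                have e1 : m1 = m₀ := hall_m z' x m1 hz'A hxA hz'x hzx hm11 hm12
                have e2 : m2 = m₀ := hall_m z' y m2 hz'A hyA hz'y hzy hm21 hm22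
                subst e1; subst e2
                exact girth_no_tri hg hm12 hadj hm22
            -- every vertex of A₀ is adjacent to m₀
            have hNm₀ : ∀ z' : V, z' ∈ A₀ → G.Adj z' m₀ := by
              intro z' hz'
              obtain ⟨w', hw''⟩ := Finset.card_pos.mp
                (show 0 < (A₀.erase z').card by
                  rw [Finset.card_erase_of_mem hz']; omega)
              obtain ⟨hw'z, hw'A⟩ := Finset.mem_erase.mp hw''
              have hnad := hindep z' w' hz' hw'A (Ne.symm hw'z)
              obtain ⟨m, hm1, hm2⟩ := (hac z' w' hz' hw'A (Ne.symm hw'z)).resolve_left hnad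
              have := hall_m z' w' m hz' hw'A (Ne.symm hw'z) hnad hm1 hm2
              exact this ▸ hm1
            by_cases hext : ∃ t, t ∈ V₀ ∧ t ∉ A₀ ∧ t ≠ m₀
            · obtain ⟨t, htV, htA₀, htm₀⟩ := hext
              refine hconc2 t m₀ htm₀ htV hm₀V ?_ hm₀A
              intro h
              exact htA₀ ((hA₀mem t).mpr ⟨(hAmem t).mp h, (hV₀mem t).mp htV⟩)
            · -- V₀ ⊆ A₀ ∪ {m₀} : G is a star with centre m₀
              have hcov : ∀ t : V, t ∈ V₀ → t ∈ A₀ ∨ t = m₀ := by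
                intro t ht
                by_cases h1 : t ∈ A₀
                · exact Or.inl h1
                · by_cases h2 : t = m₀
                  · exact Or.inr h2
                  · exact absurd ⟨t, ht, h1, h2⟩ hext
              have hM1 : M.card ≤ 1 := by
                rw [Finset.card_le_one]
                intro e he f' hf'
                by_contra hef
                have hkey : ∀ e', e' ∈ M → m₀ ∈ e' := by
                  intro e' he'
                  induction e' using Sym2.ind with
                  | _ p q =>
                    have hadj : G.Adj p q := (SimpleGraph.mem_edgeSet G).mp (hMedge _ he')
                    have hp : p ∈ V₀ := (hV₀mem p).mpr ⟨q, hadj⟩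
                    have hq : q ∈ V₀ := (hV₀mem q).mpr ⟨p, hadj.symm⟩
                    rcases hcov p hp with hpA | rfl
                    · rcases hcov q hq with hqA | rfl
                      · exact absurd hadj (hindep p q hpA hqA hadj.ne)
                      · simp [Sym2.mem_iff]
                    · simp [Sym2.mem_iff]
                exact hMdisj e he f' hf' hef m₀ (hkey e he) (hkey f' hf')
              have hA₀V₁ : A₀.card + 1 ≤ V₀.card := by
                have h1 : insert m₀ A₀ ⊆ V₀ := by
                  intro z hz
                  rcases Finset.mem_insert.mp hz with rfl | hz
                  · exact hm₀V
                  · exact hA₀V₀ hz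
                have h2 : (insert m₀ A₀).card = A₀.card + 1 :=
                  Finset.card_insert_of_notMem hm₀A₀
                have := Finset.card_le_card h1
                omega
              omega
    · have hsplit0 : S.ncard ≤ A.card + B.card := by
        have h := ncard_le_split S A B (fun x hx => (hAmem x).mpr hx)
          (fun x hx => (hBmem x).mpr hx) 0 (fun h => absurd h hroot)
        simpa using h
      by_cases hbad : ∃ u v : V, vo u ∈ S ∧ vt u ∈ S ∧ G.Adj u v ∧ vt v ∈ S
      · -- CASE II : no root, but some doubled vertex with a twin-neighbour
        obtain ⟨u, v, hu, hu', huv, hv'⟩ := hbad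
        have hNA : ∀ y : V, G.Adj u y → vo y ∉ S := fun y hy => hV1 u y hu hu' hy
        have hnadjA : ∀ x : V, vo x ∈ S → ¬ G.Adj u x := fun x hx h => hNA x h hx
        -- twins in S lie within the ball of radius 2 around u
        have hBball : ∀ z : V, vt z ∈ S →
            z = u ∨ G.Adj u z ∨ ∃ m, G.Adj u m ∧ G.Adj m z := by
          intro z hz
          by_contra hcon
          have h1 : z ≠ u := fun h => hcon (Or.inl h)
          have h2 : ¬ G.Adj u z := fun h => hcon (Or.inr (Or.inl h))
          have h3 : ¬ ∃ m, G.Adj u m ∧ G.Adj m z := fun h => hcon (Or.inr (Or.inr h))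
          have hvz : v ≠ z := by rintro rfl; exact h2 huv
          exact gp_violation hS hu hz hv'
            (Walk.cons (myc_adj_ot.mpr huv) (Walk.cons myc_adj_tn
              (Walk.cons myc_adj_nt Walk.nil)))
            (by rw [dot3 u z v h2 h3 huv]; simp) (by simp) (by simp)
            (by intro h; simp at h; exact hvz h)
        -- originals in S lie within the ball of radius 3 around u
        have hAball : ∀ x : V, vo x ∈ S → x ≠ u → ∀ c, G.Adj x c →
            G.Adj u x ∨ (∃ m, G.Adj u m ∧ G.Adj m x) ∨
              (∃ m w, G.Adj u m ∧ G.Adj m w ∧ G.Adj w x) := by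
          intro x hx hxu c hc
          by_contra hcon
          have h1 : ¬ G.Adj u x := fun h => hcon (Or.inl h)
          have h2 : ¬ ∃ m, G.Adj u m ∧ G.Adj m x := fun h => hcon (Or.inr (Or.inl h))
          have h3 : ¬ ∃ m w, G.Adj u m ∧ G.Adj m w ∧ G.Adj w x :=
            fun h => hcon (Or.inr (Or.inr h))
          exact gp_violation hS hu hx hv'
            (Walk.cons (myc_adj_ot.mpr huv) (Walk.cons myc_adj_tn (Walk.cons myc_adj_nt
              (Walk.cons (myc_adj_to.mpr hc.symm) Walk.nil))))
            (by rw [doo4 u x v c (Ne.symm hxu) h1 h2 h3 huv hc]; simp)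
            (by simp) (by simp) (by simp)
        -- common neighbours of u and S-originals are doubly excluded
        have hexcl2II : ∀ x m : V, vo x ∈ S → x ≠ u → G.Adj u m → G.Adj m x →
            vo m ∉ S ∧ vt m ∉ S := by
          intro x m hx hxu hum hmx
          have hnadj : ¬ G.Adj u x := hnadjA x hx
          have hd := doo2 u x m (Ne.symm hxu) hnadj hum hmx
          have hmu : m ≠ u := hum.ne'
          have hmx' : m ≠ x := by rintro rfl; exact hnadj hum
          constructor
          · intro hm
            exact gp_violation hS hu hx hm
              (Walk.cons (myc_adj_oo.mpr hum) (Walk.cons (myc_adj_oo.mpr hmx) Walk.nil))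
              (by rw [hd]; simp) (by simp)
              (by intro h; simp at h; exact hmu h)
              (by intro h; simp at h; exact hmx' h)
          · intro hm
            exact gp_violation hS hu hx hm
              (Walk.cons (myc_adj_ot.mpr hum) (Walk.cons (myc_adj_to.mpr hmx) Walk.nil))
              (by rw [hd]; simp) (by simp) (by simp) (by simp)
        -- interiors of 3-geodesics from u are quadruply excluded
        have hexcl3II : ∀ x m w : V, vo x ∈ S → x ≠ u → (¬ ∃ m', G.Adj u m' ∧ G.Adj m' x) →
            G.Adj u m → G.Adj m w → G.Adj w x →
            (vo m ∉ S ∧ vt m ∉ S) ∧ (vo w ∉ S ∧ vt w ∉ S) := by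
          intro x m w hx hxu hnocom hum hmw hwx
          have hnadj : ¬ G.Adj u x := hnadjA x hx
          have hd := doo3 u x m w (Ne.symm hxu) hnadj hnocom hum hmw hwx
          have hmu : m ≠ u := hum.ne'
          have hmx : m ≠ x := by rintro rfl; exact hnadj hum
          have hwu : w ≠ u := by rintro rfl; exact hnadj hwx
          have hwx' : w ≠ x := hwx.ne
          refine ⟨⟨?_, ?_⟩, ?_, ?_⟩
          · intro hm
            exact gp_violation hS hu hx hm
              (Walk.cons (myc_adj_oo.mpr hum) (Walk.cons (myc_adj_oo.mpr hmw)
                (Walk.cons (myc_adj_oo.mpr hwx) Walk.nil)))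
              (by rw [hd]; simp) (by simp)
              (by intro h; simp at h; exact hmu h)
              (by intro h; simp at h; exact hmx h)
          · intro hm
            exact gp_violation hS hu hx hm
              (Walk.cons (myc_adj_ot.mpr hum) (Walk.cons (myc_adj_to.mpr hmw)
                (Walk.cons (myc_adj_oo.mpr hwx) Walk.nil)))
              (by rw [hd]; simp) (by simp) (by simp) (by simp)
          · intro hm
            exact gp_violation hS hu hx hm
              (Walk.cons (myc_adj_oo.mpr hum) (Walk.cons (myc_adj_oo.mpr hmw)
                (Walk.cons (myc_adj_oo.mpr hwx) Walk.nil)))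
              (by rw [hd]; simp) (by simp)
              (by intro h; simp at h; exact hwu h)
              (by intro h; simp at h; exact hwx' h)
          · intro hm
            exact gp_violation hS hu hx hm
              (Walk.cons (myc_adj_oo.mpr hum) (Walk.cons (myc_adj_ot.mpr hmw)
                (Walk.cons (myc_adj_to.mpr hwx) Walk.nil)))
              (by rw [hd]; simp) (by simp) (by simp) (by simp)
        -- only the twin of v among twins of neighbours of u
        have hBu : ∀ z : V, G.Adj u z → vt z ∈ S → z = v := by
          intro z hz hz'
          by_contra hne
          exact gp_violation hS hz' hv' hu
            (Walk.cons (myc_adj_to.mpr hz.symm) (Walk.cons (myc_adj_ot.mpr huv) Walk.nil))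
            (by rw [dtt z v hne]; simp) (by simp) (by simp) (by simp)
        -- u is the unique doubled vertex
        have hABu : ∀ x : V, vo x ∈ S → vt x ∈ S → x = u := by
          intro x hx hx'
          by_contra hne
          rcases hBball x hx' with rfl | hadj | ⟨m, hum, hmx⟩
          · exact hne rfl
          · exact hNA x hadj hx
          · have hnadjux : ¬ G.Adj u x := hnadjA x hx
            have hnxv : ¬ G.Adj x v := by
              intro h
              exact (hexcl2II x v hx hne huv h.symm).2 hv'
            have hnocomxv : ¬ ∃ m', G.Adj x m' ∧ G.Adj m' v := by
              rintro ⟨m', h1, h2⟩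
              have hm'u : m' ≠ u := by rintro rfl; exact hnadjux h1.symm
              by_cases hmm : m' = m
              · subst hmm
                exact girth_no_tri hg huv h2.symm hum
              · refine girth_no_c5 hg huv h2.symm h1.symm hmx.symm hum.symm (Ne.symm hm'u)
                  (fun h => hne h.symm) ?_ ?_ hmm
                · rintro rfl; exact hnadjux huv
                · rintro rfl; exact hnxv hmx.symm
            have hd : (Mycielskian G).dist (vo x) (vt v) = 3 :=
              dot3 x v m hnxv hnocomxv hmx.symm
            exact gp_violation hS hx hv' hu
              (Walk.cons (myc_adj_oo.mpr hmx.symm) (Walk.cons (myc_adj_oo.mpr hum.symm)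
                (Walk.cons (myc_adj_ot.mpr huv) Walk.nil)))
              (by rw [hd]; simp) (by simp)
              (by intro h; simp at h; exact hne h.symm) (by simp)
        -- counting
        have hABinter : A ∩ B = {u} := by
          ext x
          simp only [Finset.mem_inter, Finset.mem_singleton]
          constructor
          · rintro ⟨h1, h2⟩
            exact hABu x ((hAmem x).mp h1) ((hBmem x).mp h2)
          · rintro rfl
            exact ⟨(hAmem _).mpr hu, (hBmem _).mpr hu'⟩
        have hABcard : A.card + B.card = (A ∪ B).card + 1 := by
          have := Finset.card_union_add_card_inter A B
          rw [hABinter] at this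
          simp at this
          omega
        have hBV₀ : ∀ z : V, z ∈ B → z ∈ V₀ := by
          intro z hz
          rcases hBball z ((hBmem z).mp hz) with rfl | hadj | ⟨m, h1, h2⟩
          · exact (hV₀mem z).mpr ⟨v, huv⟩
          · exact (hV₀mem z).mpr ⟨u, hadj.symm⟩
          · exact (hV₀mem z).mpr ⟨m, h2.symm⟩
        set C : Finset V := (A ∪ B).filter (fun x : V => ∃ w, G.Adj x w) with hC
        have hCV₀ : C ⊆ V₀ := by
          intro x hx
          exact (hV₀mem x).mpr (Finset.mem_filter.mp hx).2
        have hABC : (A ∪ B).card ≤ C.card + Iso.card := by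
          have h1 := Finset.card_filter_add_card_filter_not
            (s := A ∪ B) (p := fun x : V => ∃ w, G.Adj x w)
          rw [← hC] at h1
          have h2 : ((A ∪ B).filter (fun x : V => ¬ ∃ w, G.Adj x w)).card ≤ Iso.card := by
            apply Finset.card_le_card
            rw [hIso]
            exact Finset.filter_subset_filter _ (Finset.subset_univ (A ∪ B))
          omega
        by_cases hexc : ∃ t, t ∈ V₀ ∧ t ∉ A ∧ t ∉ B
        · obtain ⟨t, htV, htA, htB⟩ := hexc
          have htC : t ∉ C := by
            intro h
            rcases Finset.mem_union.mp (Finset.mem_filter.mp h).1 with h' | h'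
            · exact htA h'
            · exact htB h'
          have hC1 : C.card + 1 ≤ V₀.card := by
            have h1 : insert t C ⊆ V₀ := by
              intro z hz
              rcases Finset.mem_insert.mp hz with rfl | hz
              · exact htV
              · exact hCV₀ hz
            have h2 : (insert t C).card = C.card + 1 := Finset.card_insert_of_notMem htC
            have := Finset.card_le_card h1
            omega
          omega
        · have hcover : ∀ t : V, t ∈ V₀ → t ∈ A ∨ t ∈ B := by
            intro t ht
            by_contra h
            push_neg at h
            exact hexc ⟨t, ht, h.1, h.2⟩
          -- A₀ ⊆ {u}
          have hA0u : ∀ x : V, x ∈ A → (∃ c, G.Adj x c) → x = u := by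
            intro x hxA hex
            obtain ⟨c, hc⟩ := hex
            by_contra hne
            have hx : vo x ∈ S := (hAmem x).mp hxA
            by_cases hcom : ∃ m, G.Adj u m ∧ G.Adj m x
            · obtain ⟨m, h1, h2⟩ := hcom
              have hm := hexcl2II x m hx hne h1 h2
              exact hexc ⟨m, (hV₀mem m).mpr ⟨x, h2⟩,
                fun h => hm.1 ((hAmem m).mp h), fun h => hm.2 ((hBmem m).mp h)⟩
            · rcases hAball x hx hne c hc with hadj | hcom' | ⟨m, w, h1, h2, h3⟩
              · exact hNA x hadj hx
              · exact hcom hcom'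
              · have hm := hexcl3II x m w hx hne hcom h1 h2 h3
                exact hexc ⟨m, (hV₀mem m).mpr ⟨w, h2⟩,
                  fun h => hm.1.1 ((hAmem m).mp h), fun h => hm.1.2 ((hBmem m).mp h)⟩
          -- N(u) = {v}
          have hNu : ∀ z : V, G.Adj u z → z = v := by
            intro z hz
            by_contra hne
            have hznA : z ∉ A := fun h => hNA z hz ((hAmem z).mp h)
            have hznB : z ∉ B := fun h => hne (hBu z hz ((hBmem z).mp h))
            exact hexc ⟨z, (hV₀mem z).mpr ⟨u, hz.symm⟩, hznA, hznB⟩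
          have hchild : ∀ w' : V, w' ∈ V₀ → w' ≠ u → w' ≠ v → G.Adj v w' := by
            intro w' hw' hwu hwv
            rcases hcover w' hw' with hwA | hwB
            · exact absurd (hA0u w' hwA ((hV₀mem w').mp hw')) hwu
            · rcases hBball w' ((hBmem w').mp hwB) with rfl | hadj | ⟨m, h1, h2⟩
              · exact absurd rfl hwu
              · exact absurd (hNu w' hadj) hwv
              · have hm : m = v := hNu m h1
                exact hm ▸ h2
          have hM1 : M.card ≤ 1 := by
            rw [Finset.card_le_one]
            intro e he f' hf'
            by_contra hef
            have hkey : ∀ e', e' ∈ M → v ∈ e' := by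
              intro e' he'
              induction e' using Sym2.ind with
              | _ p q =>
                have hadj : G.Adj p q := (SimpleGraph.mem_edgeSet G).mp (hMedge _ he')
                by_cases hpv : p = v
                · simp [hpv]
                · by_cases hqv : q = v
                  · simp [hqv]
                  · by_cases hpu : p = u
                    · subst hpu
                      exact absurd (hNu q hadj) hqv
                    · by_cases hqu : q = u
                      · subst hqu
                        exact absurd (hNu p hadj.symm) hpv
                      · have h1 := hchild p ((hV₀mem p).mpr ⟨q, hadj⟩) hpu hpv
                        have h2 := hchild q ((hV₀mem q).mpr ⟨p, hadj.symm⟩) hqu hqv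
                        exact absurd h2 (girth_no_tri hg h1 hadj)
            exact hMdisj e he f' hf' hef v (hkey e he) (hkey f' hf')
          -- A has at most 1 + Iso.card elements
          have hAcard : A.card ≤ 1 + Iso.card := by
            have h1 := Finset.card_filter_add_card_filter_not
              (s := A) (p := fun x : V => ∃ w, G.Adj x w)
            have h2 : (A.filter (fun x : V => ¬ ∃ w, G.Adj x w)).card ≤ Iso.card := by
              apply Finset.card_le_card
              rw [hIso]
              exact Finset.filter_subset_filter _ (Finset.subset_univ A)
            have h3 : (A.filter (fun x : V => ∃ w, G.Adj x w)).card ≤ 1 := by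
              rw [Finset.card_le_one]
              intro a ha b hb
              obtain ⟨haA, hae⟩ := Finset.mem_filter.mp ha
              obtain ⟨hbA, hbe⟩ := Finset.mem_filter.mp hb
              rw [hA0u a haA hae, hA0u b hbA hbe]
            omega
          have hBcard : B.card ≤ V₀.card := Finset.card_le_card (fun z hz => hBV₀ z hz)
          omega
      · -- CASE III
        set f : V → ℕ := fun v => (if vo v ∈ S then 1 else 0) + (if vt v ∈ S then 1 else 0)
          with hf
        have hf2 : ∀ v, f v ≤ 2 := by intro v; simp only [hf]; split_ifs <;> omega
        have hedge_bound : ∀ e ∈ M, ∀ x y : V, e = s(x, y) → f x + f y ≤ 2 := by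
          intro e he x y hexy
          have hadj : G.Adj x y := by
            have := hMedge e he
            rw [hexy] at this
            exact (SimpleGraph.mem_edgeSet G).mp this
          have hkey : ¬(vo x ∈ S ∧ vt x ∈ S ∧ (vo y ∈ S ∨ vt y ∈ S)) ∧
              ¬(vo y ∈ S ∧ vt y ∈ S ∧ (vo x ∈ S ∨ vt x ∈ S)) := by
            constructor
            · rintro ⟨ha, hb, hc | hc⟩
              · exact hV1 x y ha hb hadj hc
              · exact hbad ⟨x, y, ha, hb, hadj, hc⟩
            · rintro ⟨ha, hb, hc | hc⟩
              · exact hV1 y x ha hb hadj.symm hc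
              · exact hbad ⟨y, x, ha, hb, hadj.symm, hc⟩
          simp only [hf]
          by_cases h1 : vo x ∈ S <;> by_cases h2 : vt x ∈ S <;> by_cases h3 : vo y ∈ S <;>
            by_cases h4 : vt y ∈ S <;> simp [h1, h2, h3, h4] <;> tauto
        have hsw := sum_wt_bound f hf2 M Finset.univ
          (fun e he => (G.not_isDiag_of_mem_edgeSet (hMedge e he)))
          (fun e he v hv => Finset.mem_univ v) hMdisj hedge_bound
        have hsum : (∑ v ∈ Finset.univ, f v) = A.card + B.card := by
          rw [hf, Finset.sum_add_distrib, hA, hB]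
          rw [Finset.card_filter, Finset.card_filter]
        rw [hsum, Finset.card_univ] at hsw
        omega
  apply gpNumber_le
  intro S hS
  have hk := key S hS
  omega
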